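/- Let γ : [−1,1] → ℝ³ be the smooth curve γ(t) = (t, t⁴, −t³), and set γ̄(t) = (t, t⁴). Then: (i) for every t ∈ [−1,1] the first leading principal minor of the matrix with columns γ′(t), γ″(t), γ‴(t) equals 1, while the 2×2 and 3×3 leading principal minors are positive for t ≠ 0 and vanish at t = 0; and (ii) there is no concave function B : conv(γ̄([−1,1])) → ℝ satisfying B(λ·γ̄(x) + (1−λ)·γ̄(1)) = −λx³ − (1−λ) for all λ ∈ [0,1] and x ∈ [−1,1]. In particular, the conclusion that the upper-hull parametrization defines a concave function fails when total positivity of the torsion is relaxed to allow minors to vanish at a single point. -/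

import Mathlib

noncomputable section

open Set

private lemma deriv0' : deriv (fun t : ℝ => ![t, t ^ 4, -t ^ 3]) =
    fun t : ℝ => ![1, 4 * t ^ 3, -(3 * t ^ 2)] := by
  funext t
  refine HasDerivAt.deriv ?_
  rw [hasDerivAt_pi]
  intro i
  fin_cases i
  · simpa using hasDerivAt_id' t
  · simpa using hasDerivAt_pow 4 t
  · simpa using (hasDerivAt_pow 3 t).fun_neg

private lemma deriv1' : deriv (fun t : ℝ => ![(1:ℝ), 4 * t ^ 3, -(3 * t ^ 2)]) =
    fun t : ℝ => ![0, 12 * t ^ 2, -(6 * t)] := by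
  funext t
  refine HasDerivAt.deriv ?_
  rw [hasDerivAt_pi]
  intro i
  fin_cases i
  · simpa using hasDerivAt_const t (1:ℝ)
  · simp only [Matrix.cons_val_one, Matrix.head_cons]
    simp
    exact ((hasDerivAt_pow 3 t).const_mul (4:ℝ)).congr_deriv (by push_cast; ring)
  · simp only [Matrix.cons_val_two, Matrix.tail_cons, Matrix.head_cons]
    simp
    exact ((hasDerivAt_pow 2 t).const_mul (3:ℝ)).fun_neg.congr_deriv (by push_cast; ring)

private lemma deriv2' : deriv (fun t : ℝ => ![(0:ℝ), 12 * t ^ 2, -(6 * t)]) =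
    fun t : ℝ => ![0, 24 * t, -6] := by
  funext t
  refine HasDerivAt.deriv ?_
  rw [hasDerivAt_pi]
  intro i
  fin_cases i
  · simpa using hasDerivAt_const t (0:ℝ)
  · simp only [Matrix.cons_val_one, Matrix.head_cons]
    simp
    exact ((hasDerivAt_pow 2 t).const_mul (12:ℝ)).congr_deriv (by push_cast; ring)
  · simp only [Matrix.cons_val_two, Matrix.tail_cons, Matrix.head_cons]
    simp
    exact ((hasDerivAt_id' t).const_mul (6:ℝ)).fun_neg.congr_deriv (by push_cast; ring)

theorem stmt11 (γ : ℝ → Fin 3 → ℝ) (hγ : ∀ t, γ t = ![t, t ^ 4, -t ^ 3]) :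
    ((∀ t ∈ Set.Icc (-1 : ℝ) 1,
        (Matrix.of (fun i j : Fin 1 =>
          iteratedDeriv (j.1 + 1) γ t (Fin.castLE (by omega) i))).det = 1) ∧
      (∀ t ∈ Set.Icc (-1 : ℝ) 1, t ≠ 0 →
        0 < (Matrix.of (fun i j : Fin 2 =>
          iteratedDeriv (j.1 + 1) γ t (Fin.castLE (by omega) i))).det ∧
        0 < (Matrix.of (fun i j : Fin 3 => iteratedDeriv (j.1 + 1) γ t i)).det) ∧
      ((Matrix.of (fun i j : Fin 2 =>
          iteratedDeriv (j.1 + 1) γ 0 (Fin.castLE (by omega) i))).det = 0 ∧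
        (Matrix.of (fun i j : Fin 3 => iteratedDeriv (j.1 + 1) γ 0 i)).det = 0)) ∧
    ¬∃ B : (Fin 2 → ℝ) → ℝ,
        ConcaveOn ℝ (convexHull ℝ ((fun t : ℝ => ![t, t ^ 4]) '' Set.Icc (-1 : ℝ) 1)) B ∧
        ∀ l ∈ Set.Icc (0 : ℝ) 1, ∀ x ∈ Set.Icc (-1 : ℝ) 1,
          B (l • ![x, x ^ 4] + (1 - l) • ![(1 : ℝ), 1]) = -l * x ^ 3 - (1 - l) := by
  have hγ' : γ = fun t : ℝ => ![t, t ^ 4, -t ^ 3] := funext hγ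
  have h1 : iteratedDeriv 1 γ = fun t : ℝ => ![1, 4 * t ^ 3, -(3 * t ^ 2)] := by
    rw [iteratedDeriv_succ, iteratedDeriv_zero, hγ', deriv0']
  have h2 : iteratedDeriv 2 γ = fun t : ℝ => ![0, 12 * t ^ 2, -(6 * t)] := by
    rw [iteratedDeriv_succ, h1, deriv1']
  have h3 : iteratedDeriv 3 γ = fun t : ℝ => ![0, 24 * t, -6] := by
    rw [iteratedDeriv_succ, h2, deriv2']
  constructor
  · refine ⟨?_, ?_, ?_, ?_⟩
    · intro s _; simp [Matrix.det_fin_one, h1]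
    · intro t _ ht
      constructor
      · rw [Matrix.det_fin_two]
        simp [h1, h2, Fin.castLE]
        positivity
      · rw [Matrix.det_fin_three]
        simp [h1, h2, h3]
        nlinarith [pow_pos (abs_pos.mpr ht) 2, sq_abs t, sq_nonneg t]
    · rw [Matrix.det_fin_two]; simp [h1, h2, Fin.castLE]
    · rw [Matrix.det_fin_three]; simp [h1, h2, h3]
  · rintro ⟨B, hB, hval⟩
    have hmem : ∀ t : ℝ, t ∈ Set.Icc (-1:ℝ) 1 →
        ![t, t ^ 4] ∈ convexHull ℝ ((fun t : ℝ => ![t, t ^ 4]) '' Set.Icc (-1 : ℝ) 1) := by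
      intro t ht
      exact subset_convexHull ℝ _ ⟨t, ht, rfl⟩
    have hA := hval 1 (by norm_num) (-1) (by norm_num)
    norm_num at hA
    have hO := hval 1 (by norm_num) 0 (by norm_num)
    norm_num at hO
    have hP := hval (32/39) (by norm_num) (-1/2) (by norm_num)
    norm_num at hP
    -- hA : B ![-1, 1] = 1, hO : B ![0, 0] = 0, hP : B ![-(3/13), 3/13] = -(1/13)
    have hmA : ![(-1:ℝ), 1] ∈ convexHull ℝ ((fun t : ℝ => ![t, t ^ 4]) '' Set.Icc (-1 : ℝ) 1) := by
      have e : ![(-1:ℝ), 1] = ![(-1:ℝ), (-1) ^ 4] := by funext i; fin_cases i <;> norm_num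
      rw [e]; exact hmem (-1) (by norm_num)
    have hmO : ![(0:ℝ), 0] ∈ convexHull ℝ ((fun t : ℝ => ![t, t ^ 4]) '' Set.Icc (-1 : ℝ) 1) := by
      have e : ![(0:ℝ), 0] = ![(0:ℝ), 0 ^ 4] := by funext i; fin_cases i <;> norm_num
      rw [e]; exact hmem 0 (by norm_num)
    have hconc := hB.2 hmA hmO
        (by norm_num : (0:ℝ) ≤ 3/13) (by norm_num : (0:ℝ) ≤ 10/13) (by norm_num)
    have e2 : ((3:ℝ)/13) • ![(-1:ℝ), 1] + ((10:ℝ)/13) • ![(0:ℝ), 0]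
        = ![(-(3/13) : ℝ), 3/13] := by
      funext i; fin_cases i <;> norm_num
    rw [e2, hP, hA, hO] at hconc
    norm_num at hconc
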